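/- Let B be a compact topological space and H a complex Hilbert space. Let F : B → B(H) be a strongly continuous map (for every x ∈ H the map b ↦ F(b)x is continuous) such that each F(b) is self-adjoint, each operator F(b)² − 1 is compact, and the map b ↦ F(b)² − 1 is continuous in the operator norm. Let φ : ℝ → ℝ be a continuous function with φ(1) = φ(−1) = 1. Then for each b the operator φ(F(b)) − 1 is compact, and the map b ↦ φ(F(b)) − 1 is continuous in the operator norm, where φ(F(b)) denotes the continuous functional calculus. -/

import Mathlib

open Polynomial Set Metric Filter Topology ContinuousLinearMap

section Aux

variable {B : Type*} [TopologicalSpace B]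
variable {H : Type*} [NormedAddCommGroup H] [InnerProductSpace ℂ H] [CompleteSpace H]

/-- Operator norm bound from a bound on the closed unit ball. -/
lemma opNorm_le_of_unit_ball' (T : H →L[ℂ] H) {c : ℝ} (hc : 0 ≤ c)
    (h : ∀ x : H, ‖x‖ ≤ 1 → ‖T x‖ ≤ c) : ‖T‖ ≤ c := by
  refine T.opNorm_le_bound hc fun x => ?_
  rcases eq_or_ne x 0 with rfl | hx
  · simp
  · have hxn : (0:ℝ) < ‖x‖ := norm_pos_iff.mpr hx
    set u : H := ((‖x‖ : ℂ))⁻¹ • x with hu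
    have hu1 : ‖u‖ ≤ 1 := by
      rw [hu, norm_smul]
      simp [hxn.ne']
    have hxu : x = (‖x‖ : ℂ) • u := by
      rw [hu, smul_smul, mul_inv_cancel₀ (by exact_mod_cast hxn.ne'), one_smul]
    calc ‖T x‖ = ‖T ((‖x‖ : ℂ) • u)‖ := by rw [← hxu]
      _ = ‖(‖x‖ : ℂ)‖ * ‖T u‖ := by rw [map_smul, norm_smul]
      _ ≤ ‖x‖ * c := by
          rw [Complex.norm_real, Real.norm_eq_abs, abs_of_pos hxn]
          exact mul_le_mul_of_nonneg_left (h u hu1) hxn.le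
      _ = c * ‖x‖ := mul_comm _ _

/-- Composition of a uniformly bounded strongly continuous family with a
strongly continuous vector family is strongly continuous. -/
lemma strong_cont_comp {S : B → H →L[ℂ] H} {M : ℝ}
    (hSb : ∀ b, ‖S b‖ ≤ M) (hS : ∀ x, Continuous fun b => S b x)
    {g : B → H} (hg : Continuous g) : Continuous fun b => S b (g b) := by
  rw [continuous_iff_continuousAt]
  intro b₀
  rw [ContinuousAt, tendsto_iff_norm_sub_tendsto_zero]
  have key : ∀ b, ‖S b (g b) - S b₀ (g b₀)‖ ≤ M * ‖g b - g b₀‖ + ‖S b (g b₀) - S b₀ (g b₀)‖ := by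
    intro b
    have h1 : S b (g b) - S b₀ (g b₀) = S b (g b - g b₀) + (S b (g b₀) - S b₀ (g b₀)) := by
      rw [map_sub]; abel
    rw [h1]
    refine (norm_add_le _ _).trans (add_le_add_left ?_ _)
    calc ‖S b (g b - g b₀)‖ ≤ ‖S b‖ * ‖g b - g b₀‖ := (S b).le_opNorm _
      _ ≤ M * ‖g b - g b₀‖ := mul_le_mul_of_nonneg_right (hSb b) (norm_nonneg _)
  have hA : Tendsto (fun b => ‖g b - g b₀‖) (𝓝 b₀) (𝓝 0) := by
    have := hg.tendsto b₀
    rwa [tendsto_iff_norm_sub_tendsto_zero] at this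
  have hB : Tendsto (fun b => ‖S b (g b₀) - S b₀ (g b₀)‖) (𝓝 b₀) (𝓝 0) := by
    have := (hS (g b₀)).tendsto b₀
    rwa [tendsto_iff_norm_sub_tendsto_zero] at this
  have := (hA.const_mul M).add hB
  simp only [mul_zero, add_zero] at this
  exact squeeze_zero (fun b => norm_nonneg _) key this

lemma strong_cont_pow {F : B → H →L[ℂ] H} {M : ℝ} (hFb : ∀ b, ‖F b‖ ≤ M)
    (hstrong : ∀ x : H, Continuous fun b => F b x) (n : ℕ) (x : H) :
    Continuous fun b => (F b ^ n) x := by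
  induction n with
  | zero => simpa using continuous_const
  | succ n ih =>
    have h : ∀ b, (F b ^ (n+1)) x = F b ((F b ^ n) x) := by
      intro b; rw [pow_succ']; rfl
    simpa only [h] using strong_cont_comp hFb hstrong ih

lemma strong_cont_aeval {F : B → H →L[ℂ] H} {M : ℝ} (hFb : ∀ b, ‖F b‖ ≤ M)
    (hstrong : ∀ x : H, Continuous fun b => F b x) (q : ℝ[X]) (x : H) :
    Continuous fun b => (aeval (F b) q) x := by
  induction q using Polynomial.induction_on' with
  | add p q hp hq =>
    simp only [map_add, ContinuousLinearMap.add_apply]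
    exact hp.add hq
  | monomial n a =>
    have h : ∀ b, (aeval (F b) (monomial n a)) x = a • ((F b ^ n) x) := by
      intro b
      simp [aeval_monomial, Algebra.algebraMap_eq_smul_one, ContinuousLinearMap.mul_apply]
    simp only [h]
    exact (strong_cont_pow hFb hstrong n x).const_smul a

/-- Key analytic lemma: a uniformly bounded strongly continuous family,
post-composed with a fixed compact operator, tends to its value in norm. -/
lemma tendsto_mul_compact {Q : B → H →L[ℂ] H} {C : ℝ}
    (hQb : ∀ b, ‖Q b‖ ≤ C) (hQs : ∀ x : H, Continuous fun b => Q b x)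
    {K : H →L[ℂ] H} (hK : IsCompactOperator K) (b₀ : B) :
    Tendsto (fun b => (Q b - Q b₀) * K) (𝓝 b₀) (𝓝 0) := by
  have hC0 : 0 ≤ C := le_trans (norm_nonneg _) (hQb b₀)
  rw [Metric.tendsto_nhds]
  intro ε hε
  set δ : ℝ := ε / (4 * C + 4) with hδdef
  have hδ : 0 < δ := by positivity
  have htb : TotallyBounded (⇑K '' closedBall (0:H) 1) := by
    have hc : IsCompact (closure (⇑(K : H →ₗ[ℂ] H) '' closedBall (0:H) 1)) :=
      IsCompactOperator.isCompact_closure_image_closedBall (𝕜₁ := ℂ)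
        (f := (K : H →ₗ[ℂ] H)) hK 1
    exact hc.totallyBounded.subset subset_closure
  obtain ⟨t, htfin, hcover⟩ := totallyBounded_iff.mp htb δ hδ
  have hev : ∀ᶠ b in 𝓝 b₀, ∀ y ∈ t, ‖Q b y - Q b₀ y‖ < ε/2 := by
    rw [eventually_all_finite htfin]
    intro y hy
    have h := (hQs y).tendsto b₀
    rw [tendsto_iff_norm_sub_tendsto_zero] at h
    exact h.eventually (eventually_lt_nhds (by positivity))
  filter_upwards [hev] with b hb
  rw [dist_zero_right]
  have key : ‖(Q b - Q b₀) * K‖ ≤ 2*C*δ + ε/2 := by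
    apply opNorm_le_of_unit_ball' _ (by positivity)
    intro x hx
    obtain ⟨y, hyt, hy⟩ : ∃ y ∈ t, K x ∈ ball y δ := by
      have hmem : K x ∈ ⇑K '' closedBall (0:H) 1 :=
        ⟨x, by simpa [mem_closedBall, dist_zero_right] using hx, rfl⟩
      simpa [mem_iUnion₂] using hcover hmem
    have hsplit : ((Q b - Q b₀) * K) x = (Q b - Q b₀) (K x - y) + (Q b y - Q b₀ y) := by
      simp only [ContinuousLinearMap.mul_apply, ContinuousLinearMap.sub_apply, map_sub]
      abel
    rw [hsplit]
    have h1 : ‖Q b - Q b₀‖ ≤ 2*C := by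
      calc ‖Q b - Q b₀‖ ≤ ‖Q b‖ + ‖Q b₀‖ := norm_sub_le _ _
        _ ≤ C + C := add_le_add (hQb b) (hQb b₀)
        _ = 2*C := by ring
    have h2 : ‖K x - y‖ ≤ δ := by
      rw [mem_ball, dist_eq_norm] at hy
      exact hy.le
    calc ‖(Q b - Q b₀) (K x - y) + (Q b y - Q b₀ y)‖
        ≤ ‖(Q b - Q b₀) (K x - y)‖ + ‖Q b y - Q b₀ y‖ := norm_add_le _ _
      _ ≤ 2*C*δ + ε/2 := by
          refine add_le_add ?_ (hb y hyt).le
          calc ‖(Q b - Q b₀) (K x - y)‖ ≤ ‖Q b - Q b₀‖ * ‖K x - y‖ := le_opNorm _ _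
            _ ≤ (2*C) * δ := mul_le_mul h1 h2 (norm_nonneg _) (by positivity)
  have hlt : 2*C*δ + ε/2 < ε := by
    have h4 : (0:ℝ) < 4*C+4 := by positivity
    have hδε : δ * (4*C+4) = ε := by rw [hδdef]; field_simp
    have : 2*C*δ < ε/2 := by nlinarith
    linarith
  exact lt_of_le_of_lt key hlt

/-- Norm continuity of `b ↦ Q b * K b` for `Q` strongly continuous, uniformly
bounded, and `K` norm-continuous, pointwise compact. -/
lemma cont_mul_compact {Q K : B → H →L[ℂ] H} {C : ℝ}
    (hQb : ∀ b, ‖Q b‖ ≤ C) (hQs : ∀ x : H, Continuous fun b => Q b x)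
    (hKc : Continuous K) (hK : ∀ b, IsCompactOperator (K b)) :
    Continuous fun b => Q b * K b := by
  rw [continuous_iff_continuousAt]
  intro b₀
  have hdecomp : ∀ b, Q b * K b
      = Q b * (K b - K b₀) + ((Q b - Q b₀) * K b₀ + Q b₀ * K b₀) := by
    intro b; simp only [mul_sub, sub_mul]; abel
  have h1 : Tendsto (fun b => Q b * (K b - K b₀)) (𝓝 b₀) (𝓝 0) := by
    have hb : Tendsto (fun b => ‖K b - K b₀‖) (𝓝 b₀) (𝓝 0) := by
      have := hKc.tendsto b₀
      rwa [tendsto_iff_norm_sub_tendsto_zero] at this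
    have hbound : ∀ b, ‖Q b * (K b - K b₀)‖ ≤ C * ‖K b - K b₀‖ := by
      intro b
      calc ‖Q b * (K b - K b₀)‖ ≤ ‖Q b‖ * ‖K b - K b₀‖ := norm_mul_le _ _
        _ ≤ C * ‖K b - K b₀‖ :=
            mul_le_mul_of_nonneg_right (hQb b) (norm_nonneg _)
    have := hb.const_mul C
    rw [mul_zero] at this
    exact squeeze_zero_norm hbound this
  have h2 : Tendsto (fun b => (Q b - Q b₀) * K b₀) (𝓝 b₀) (𝓝 0) :=
    tendsto_mul_compact hQb hQs (hK b₀) b₀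
  have h3 : Tendsto (fun b => (Q b - Q b₀) * K b₀ + Q b₀ * K b₀) (𝓝 b₀)
      (𝓝 (Q b₀ * K b₀)) := by
    have := h2.add (tendsto_const_nhds (x := Q b₀ * K b₀))
    simpa using this
  have hsum := h1.add h3
  rw [zero_add] at hsum
  have hfun : (fun b => Q b * (K b - K b₀) + ((Q b - Q b₀) * K b₀ + Q b₀ * K b₀))
      = fun b => Q b * K b := by
    funext b; rw [← hdecomp b]
  rw [hfun] at hsum
  exact hsum

/-- Polynomial approximation: any continuous `φ` with `φ 1 = φ (-1) = 1` has
`φ - 1` uniformly approximated on `[-M, M]` by `(x² - 1) q(x)`. -/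
lemma exists_poly_approx (φ : ℝ → ℝ) (hφ : Continuous φ) (hφ1 : φ 1 = 1) (hφm1 : φ (-1) = 1)
    {M : ℝ} (hM : 1 ≤ M) {ε : ℝ} (hε : 0 < ε) :
    ∃ q : ℝ[X], ∀ x ∈ Icc (-M) M, |(φ x - 1) - (x^2 - 1) * q.eval x| ≤ ε := by
  set f : ℝ → ℝ := fun x => φ x - 1 with hfdef
  have hf : ContinuousOn f (Icc (-M) M) := (hφ.sub continuous_const).continuousOn
  set ε' : ℝ := ε / (2 + M) with hε'def
  have hε' : 0 < ε' := by positivity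
  obtain ⟨p, hp⟩ := exists_polynomial_near_of_continuousOn (-M) M f hf ε' hε'
  have h1m : (1:ℝ) ∈ Icc (-M) M := ⟨by linarith, by linarith⟩
  have hm1m : (-1:ℝ) ∈ Icc (-M) M := ⟨by linarith, by linarith⟩
  have hf1 : f 1 = 0 := by simp [hfdef, hφ1]
  have hfm1 : f (-1) = 0 := by simp [hfdef, hφm1]
  set a : ℝ := (p.eval 1 + p.eval (-1)) / 2 with hadef
  set c : ℝ := (p.eval 1 - p.eval (-1)) / 2 with hcdef
  set p' : ℝ[X] := p - (C a + C c * X) with hp'def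
  have hp'1 : p'.eval 1 = 0 := by simp [hp'def, hadef, hcdef]; ring
  have hp'm1 : p'.eval (-1) = 0 := by simp [hp'def, hadef, hcdef]; ring
  obtain ⟨r, hr⟩ : (X - C (1:ℝ)) ∣ p' := dvd_iff_isRoot.mpr hp'1
  have hrm1 : r.eval (-1) = 0 := by
    have h' := hp'm1
    rw [hr] at h'
    simp only [eval_mul, eval_sub, eval_X, eval_C] at h'
    rcases mul_eq_zero.mp h' with h'' | h''
    · norm_num at h''
    · exact h''
  obtain ⟨q, hq⟩ : (X - C (-1:ℝ)) ∣ r := dvd_iff_isRoot.mpr hrm1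
  refine ⟨q, fun x hx => ?_⟩
  have e1 : |p.eval 1| ≤ ε' := by
    have := hp 1 h1m; rw [hf1, sub_zero] at this; exact this.le
  have e2 : |p.eval (-1)| ≤ ε' := by
    have := hp (-1) hm1m; rw [hfm1, sub_zero] at this; exact this.le
  have ha : |a| ≤ ε' := by
    rw [hadef, abs_div]
    rw [div_le_iff₀ (by norm_num : (0:ℝ) < |(2:ℝ)|)]
    calc |p.eval 1 + p.eval (-1)| ≤ |p.eval 1| + |p.eval (-1)| := abs_add_le _ _
      _ ≤ ε' + ε' := add_le_add e1 e2
      _ = ε' * |2| := by rw [abs_two]; ring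
  have hc : |c| ≤ ε' := by
    rw [hcdef, abs_div]
    rw [div_le_iff₀ (by norm_num : (0:ℝ) < |(2:ℝ)|)]
    calc |p.eval 1 - p.eval (-1)| ≤ |p.eval 1| + |p.eval (-1)| := abs_sub _ _
      _ ≤ ε' + ε' := add_le_add e1 e2
      _ = ε' * |2| := by rw [abs_two]; ring
  have hxM : |x| ≤ M := abs_le.mpr ⟨hx.1, hx.2⟩
  have heval : (x^2 - 1) * q.eval x = p'.eval x := by
    rw [hr, hq]
    simp only [eval_mul, eval_sub, eval_X, eval_C]
    ring
  have hfp : |f x - p.eval x| ≤ ε' := by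
    have := hp x hx
    rw [abs_sub_comm] at this
    exact this.le
  have hlx : |a + c * x| ≤ ε' + ε' * M := by
    calc |a + c * x| ≤ |a| + |c * x| := abs_add_le _ _
      _ = |a| + |c| * |x| := by rw [abs_mul]
      _ ≤ ε' + ε' * M := add_le_add ha (mul_le_mul hc hxM (abs_nonneg _) hε'.le)
  have hsplit : f x - (x^2 - 1) * q.eval x = (f x - p.eval x) + (a + c * x) := by
    rw [heval, hp'def]
    simp only [eval_sub, eval_add, eval_mul, eval_C, eval_X]
    ring
  calc |(φ x - 1) - (x^2 - 1) * q.eval x| = |(f x - p.eval x) + (a + c * x)| := by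
        rw [← hsplit]
    _ ≤ |f x - p.eval x| + |a + c * x| := abs_add_le _ _
    _ ≤ ε' + (ε' + ε' * M) := add_le_add hfp hlx
    _ = ε' * (2 + M) := by ring
    _ = ε := by rw [hε'def]; field_simp

end Aux

/-- Lemma 1.5: if `F b` is a strongly continuous family of bounded self-adjoint operators
with `F b ^ 2 - 1` compact and norm-continuous in `b` (with `B` compact), then for every
continuous `φ : ℝ → ℝ` with `φ 1 = φ (-1) = 1`, the family `φ(F b) - 1` is compact and
norm-continuous in `b`. -/
theorem cfc_sub_one_compact_continuous
    {B : Type*} [TopologicalSpace B] [CompactSpace B]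
    {H : Type*} [NormedAddCommGroup H] [InnerProductSpace ℂ H] [CompleteSpace H]
    (F : B → (H →L[ℂ] H)) (hsa : ∀ b, IsSelfAdjoint (F b))
    (hstrong : ∀ x : H, Continuous fun b => F b x)
    (hcompact : ∀ b, IsCompactOperator ((F b ^ 2 - 1 : H →L[ℂ] H)))
    (hcont : Continuous fun b => (F b ^ 2 - 1 : H →L[ℂ] H))
    (φ : ℝ → ℝ) (hφ : Continuous φ) (hφ1 : φ 1 = 1) (hφm1 : φ (-1) = 1) :
    (∀ b, IsCompactOperator ((cfc φ (F b) - 1 : H →L[ℂ] H))) ∧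
      Continuous fun b => (cfc φ (F b) - 1 : H →L[ℂ] H) := by
  obtain hH | hH := subsingleton_or_nontrivial H
  · constructor
    · intro b
      have h0 : (cfc φ (F b) - 1 : H →L[ℂ] H) = 0 := Subsingleton.elim _ _
      rw [h0]
      exact isCompactOperator_zero
    · exact continuous_of_const fun x y => Subsingleton.elim _ _
  -- uniform bound on ‖F b‖
  have hb1 : ∀ x : H, ∃ C, ∀ b, ‖F b x‖ ≤ C := by
    intro x
    obtain ⟨C, hC⟩ := (isCompact_univ (X := B)).exists_bound_of_continuousOn
      ((hstrong x).continuousOn)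
    exact ⟨C, fun b => hC b (mem_univ b)⟩
  obtain ⟨M₀, hM₀⟩ := banach_steinhaus hb1
  set M : ℝ := max M₀ 1 with hMdef
  have hM1 : (1:ℝ) ≤ M := le_max_right _ _
  have hFM : ∀ b, ‖F b‖ ≤ M := fun b => (hM₀ b).trans (le_max_left _ _)
  have hspec : ∀ b, spectrum ℝ (F b) ⊆ Set.Icc (-M) M := by
    intro b x hx
    have h := spectrum.norm_le_norm_of_mem hx
    rw [Real.norm_eq_abs] at h
    exact abs_le.mp (h.trans (hFM b))
  -- choose approximating polynomials
  have hqex : ∀ n : ℕ, ∃ q : ℝ[X],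
      ∀ x ∈ Set.Icc (-M) M, |(φ x - 1) - (x^2 - 1) * q.eval x| ≤ 1/((n:ℝ)+1) :=
    fun n => exists_poly_approx φ hφ hφ1 hφm1 hM1 (by positivity)
  choose q hq using hqex
  set g : ℕ → B → (H →L[ℂ] H) := fun n b => (F b ^ 2 - 1) * (aeval (F b) (q n)) with hgdef
  have hqcont : ∀ n, Continuous fun x : ℝ => (q n).eval x := fun n => (q n).continuous
  -- cfc computation
  have hkey : ∀ n b, cfc φ (F b) - 1 - g n b
      = cfc (fun x : ℝ => (φ x - 1) - (x^2 - 1) * (q n).eval x) (F b) := by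
    intro n b
    have hc1 : ContinuousOn (fun x : ℝ => φ x - 1) (spectrum ℝ (F b)) :=
      (hφ.sub continuous_const).continuousOn
    have hc2 : ContinuousOn (fun x : ℝ => (x^2 - 1) * (q n).eval x) (spectrum ℝ (F b)) :=
      (((continuous_pow 2).sub continuous_const).mul (hqcont n)).continuousOn
    have h1 : cfc (fun x : ℝ => φ x - 1) (F b) = cfc φ (F b) - 1 := by
      rw [cfc_sub (fun x : ℝ => φ x) (fun _ : ℝ => (1:ℝ)) (F b) hφ.continuousOn
        continuousOn_const, cfc_const (1:ℝ) (F b) (hsa b), map_one]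
    have hsq : cfc (fun x : ℝ => x^2 - 1) (F b) = F b ^ 2 - 1 := by
      rw [cfc_sub (fun x : ℝ => x^2) (fun _ : ℝ => (1:ℝ)) (F b)
        ((continuous_pow 2).continuousOn) continuousOn_const,
        cfc_pow_id (F b) 2 (hsa b), cfc_const (1:ℝ) (F b) (hsa b), map_one]
    have h2 : cfc (fun x : ℝ => (x^2 - 1) * (q n).eval x) (F b) = g n b := by
      rw [cfc_mul (fun x : ℝ => x^2 - 1) (fun x : ℝ => (q n).eval x) (F b)
        (((continuous_pow 2).sub continuous_const).continuousOn) (hqcont n).continuousOn,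
        hsq, cfc_polynomial (q n) (F b) (hsa b)]
    rw [cfc_sub (fun x : ℝ => φ x - 1) (fun x : ℝ => (x^2 - 1) * (q n).eval x) (F b)
      hc1 hc2, h1, h2]
  have hnorm : ∀ n b, ‖cfc φ (F b) - 1 - g n b‖ ≤ 1/((n:ℝ)+1) := by
    intro n b
    rw [hkey n b]
    refine norm_cfc_le (by positivity) fun x hx => ?_
    rw [Real.norm_eq_abs]
    exact hq n x (hspec b hx)
  -- properties of Q n b := aeval (F b) (q n)
  have hQsa : ∀ n b, IsSelfAdjoint (aeval (F b) (q n)) := by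
    intro n b
    rw [← cfc_polynomial (q n) (F b) (hsa b)]
    exact cfc_predicate _ _
  have hQbound : ∀ n, ∃ C : ℝ, 0 ≤ C ∧ ∀ b, ‖aeval (F b) (q n)‖ ≤ C := by
    intro n
    obtain ⟨c, hc⟩ := (isCompact_Icc (a := -M) (b := M)).exists_bound_of_continuousOn
      (hqcont n).continuousOn
    refine ⟨max c 0, le_max_right _ _, fun b => ?_⟩
    rw [← cfc_polynomial (q n) (F b) (hsa b)]
    refine norm_cfc_le (le_max_right _ _) fun x hx => ?_
    exact (hc x (hspec b hx)).trans (le_max_left _ _)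
  have hQs : ∀ n (x : H), Continuous fun b => (aeval (F b) (q n)) x :=
    fun n x => strong_cont_aeval hFM hstrong (q n) x
  -- continuity of each g n
  have hgcont : ∀ n, Continuous (g n) := by
    intro n
    obtain ⟨Cn, hCn0, hCnb⟩ := hQbound n
    have h := cont_mul_compact (Q := fun b => aeval (F b) (q n))
      (K := fun b => (F b ^ 2 - 1 : H →L[ℂ] H)) hCnb (hQs n) hcont hcompact
    have hstar : ∀ b, g n b = star ((aeval (F b) (q n)) * (F b ^ 2 - 1)) := by
      intro b
      rw [star_mul, (hQsa n b).star_eq,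
        (((hsa b).pow 2).sub (IsSelfAdjoint.one _)).star_eq]
    have hgeq : g n = fun b => star ((aeval (F b) (q n)) * (F b ^ 2 - 1)) := funext hstar
    rw [hgeq]
    exact continuous_star.comp h
  -- compactness of each g n b
  have hgcpt : ∀ n b, IsCompactOperator (g n b) := by
    intro n b
    have h := (hcompact b).comp_clm (aeval (F b) (q n))
    have heq : ⇑(g n b) = ⇑(F b ^ 2 - 1 : H →L[ℂ] H) ∘ ⇑(aeval (F b) (q n)) := rfl
    rwa [← heq] at h
  -- uniform convergence
  have htu : TendstoUniformly (fun n b => g n b) (fun b => cfc φ (F b) - 1) atTop := by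
    rw [Metric.tendstoUniformly_iff]
    intro ε hε
    obtain ⟨N, hN⟩ := exists_nat_gt (1/ε)
    filter_upwards [eventually_ge_atTop N] with n hn b
    rw [dist_eq_norm]
    have h1 : ‖cfc φ (F b) - 1 - g n b‖ ≤ 1/((n:ℝ)+1) := hnorm n b
    have h2 : (1:ℝ)/((n:ℝ)+1) < ε := by
      rw [div_lt_iff₀ (by positivity)]
      rw [div_lt_iff₀ hε] at hN
      have : (N:ℝ) ≤ n := by exact_mod_cast hn
      nlinarith
    exact lt_of_le_of_lt h1 h2
  constructor
  · intro b
    have htb : Tendsto (fun n => g n b) atTop (𝓝 (cfc φ (F b) - 1)) := htu.tendsto_at b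
    exact isClosed_setOf_isCompactOperator.mem_of_tendsto htb
      (Filter.Eventually.of_forall fun n => hgcpt n b)
  · exact htu.continuous (Filter.Eventually.of_forall hgcont).frequently
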